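/- Every 0-1 matrix admitting a 1D voter-candidate interval explanation is linearly consistent: if there are closed real intervals I_i for rows and J_c for columns with A[i][c] = 1 iff I_i ∩ J_c ≠ ∅, then there exists a linear order ≻ on rows and columns (e.g., by increasing left endpoint) such that for all rows i ≻ j and columns a ≻ b, A[i][b] = 1 and A[j][a] = 1 imply A[i][a] = 1. -/

import Mathlib

/-- The linear-consistency condition for a given strict order `r` (where `r x y` means
`x ≻ y`) on the disjoint union of rows and columns. -/
def LCCond {n m : ℕ} (A : Fin n → Fin m → Bool)
    (r : (Fin n ⊕ Fin m) → (Fin n ⊕ Fin m) → Prop) : Prop :=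
  ∀ (i j : Fin n) (a b : Fin m), r (Sum.inl i) (Sum.inl j) → r (Sum.inr a) (Sum.inr b) →
    A i b = true → A j a = true → A i a = true

/-- Every matrix with a 1D voter-candidate interval explanation is linearly consistent. -/
theorem vci_implies_lc {n m : ℕ} (A : Fin n → Fin m → Bool)
    (vl vr : Fin n → ℝ) (cl cr : Fin m → ℝ)
    (hv : ∀ i, vl i ≤ vr i) (hc : ∀ j, cl j ≤ cr j)
    (hA : ∀ i j, A i j = true ↔ (Set.Icc (vl i) (vr i) ∩ Set.Icc (cl j) (cr j)).Nonempty) :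
    ∃ r : (Fin n ⊕ Fin m) → (Fin n ⊕ Fin m) → Prop,
      IsStrictTotalOrder _ r ∧ LCCond A r := by
  -- key: left endpoint; enc: injective tiebreaker
  set key : (Fin n ⊕ Fin m) → ℝ := Sum.elim vl cl with hkey
  set enc : (Fin n ⊕ Fin m) → ℕ := Sum.elim (fun i => (i : ℕ)) (fun a => n + (a : ℕ)) with henc
  have henc_inj : Function.Injective enc := by
    rintro (i | i) (j | j) h <;> simp [henc] at h
    · exact congrArg Sum.inl (Fin.ext h)
    · omega
    · omega
    · exact congrArg Sum.inr (Fin.ext (by omega))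
  refine ⟨fun x y => key x < key y ∨ (key x = key y ∧ enc x < enc y), ?_, ?_⟩
  · refine { trichotomous := ?_, irrefl := ?_, trans := ?_ }
    · -- trichotomous
      intro x y
      refine (fun (tri : (key x < key y ∨ (key x = key y ∧ enc x < enc y)) ∨ x = y ∨ (key y < key x ∨ (key y = key x ∧ enc y < enc x))) h1 h2 => tri.elim (fun t => absurd t h1) (fun t => t.elim id (fun t => absurd t h2))) ?_
      rcases lt_trichotomy (key x) (key y) with h | h | h
      · exact Or.inl (Or.inl h)
      · rcases lt_trichotomy (enc x) (enc y) with h' | h' | h'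
        · exact Or.inl (Or.inr ⟨h, h'⟩)
        · exact Or.inr (Or.inl (henc_inj h'))
        · exact Or.inr (Or.inr (Or.inr ⟨h.symm, h'⟩))
      · exact Or.inr (Or.inr (Or.inl h))
    · intro x h
      rcases h with h | ⟨_, h⟩
      · exact lt_irrefl _ h
      · exact lt_irrefl _ h
    · rintro x y z (h1 | ⟨h1, h1'⟩) (h2 | ⟨h2, h2'⟩)
      · exact Or.inl (h1.trans h2)
      · exact Or.inl (h2 ▸ h1)
      · exact Or.inl (h1 ▸ h2)
      · exact Or.inr ⟨h1.trans h2, h1'.trans h2'⟩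
  · -- linear consistency
    intro i j a b hij hab hib hja
    have hij' : vl i ≤ vl j := by
      rcases hij with h | ⟨h, _⟩
      · exact le_of_lt h
      · exact le_of_eq h
    have hab' : cl a ≤ cl b := by
      rcases hab with h | ⟨h, _⟩
      · exact le_of_lt h
      · exact le_of_eq h
    have key_iff : ∀ (p : Fin n) (q : Fin m), A p q = true ↔ vl p ≤ cr q ∧ cl q ≤ vr p := by
      intro p q
      rw [hA p q, Set.Icc_inter_Icc, Set.nonempty_Icc, max_le_iff, le_min_iff, le_min_iff]
      constructor
      · rintro ⟨⟨_, h1⟩, ⟨h2, _⟩⟩; exact ⟨h1, h2⟩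
      · rintro ⟨h1, h2⟩; exact ⟨⟨hv p, h1⟩, ⟨h2, hc q⟩⟩
    rw [key_iff] at hib hja ⊢
    exact ⟨hij'.trans hja.1, hab'.trans hib.2⟩
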